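/- Let n1, n2, m, p, r be positive integers. Let E11, A11 be real n1×n1 matrices, A21 a real n2×n1 matrix, B1 a real n1×m matrix, and C a real p×n1 matrix. Let σ_1, …, σ_r be complex numbers and b_1, …, b_r complex vectors in ℂ^m, and suppose for each i = 1, …, r the block (saddle-point) matrix K(σ_i) = [[σ_i E11 − A11, A21ᵀ], [A21, 0]] is invertible, and let (φ_i, z_i) ∈ ℂ^{n1} × ℂ^{n2} be the unique solution of K(σ_i)(φ_i; z_i) = (B1 b_i; 0). Set Φ = [φ_1, …, φ_r] ∈ ℂ^{n1×r} and define the reduced matrices Ẽ = Φᵀ E11 Φ, Ã = Φᵀ A11 Φ, B̃ = Φᵀ B1, C̃ = C Φ. Then for each i with σ_i Ẽ − Ã invertible, the reduced transfer function interpolates the full transfer function tangentially at σ_i in direction b_i: C̃ (σ_i Ẽ − Ã)^{-1} B̃ b_i = C φ_i, where C φ_i is exactly the value G(σ_i) b_i of the full differential-algebraic system's transfer function (the output map C applied to the velocity component of the solution of the shifted saddle-point system with right-hand side (B1 b_i; 0)). -/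
import Mathlib


open Matrix

/-- Tangential interpolation for interpolatory model order reduction of an index-2
differential-algebraic (Stokes-like) system.  The basis vectors `φ i` are obtained from
shifted saddle-point solves with right-hand side `(B1 b i; 0)`; the Galerkin-projected
reduced transfer function then interpolates the full transfer function tangentially:
`C̃ (σᵢ Ẽ − Ã)⁻¹ B̃ bᵢ = C φᵢ = G(σᵢ) bᵢ`. -/
theorem imor_dae_tangential_interpolation
    (n1 n2 m p r : ℕ) (hn1 : 0 < n1) (hn2 : 0 < n2) (hm : 0 < m) (hp : 0 < p) (hr : 0 < r)
    (E11 A11 : Matrix (Fin n1) (Fin n1) ℝ)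
    (A21 : Matrix (Fin n2) (Fin n1) ℝ)
    (B1 : Matrix (Fin n1) (Fin m) ℝ)
    (C : Matrix (Fin p) (Fin n1) ℝ)
    (σ : Fin r → ℂ) (b : Fin r → Fin m → ℂ)
    (φ : Fin r → Fin n1 → ℂ) (z : Fin r → Fin n2 → ℂ)
    -- the shifted saddle-point (block) matrix K(σᵢ)
    (K : Fin r → Matrix (Fin n1 ⊕ Fin n2) (Fin n1 ⊕ Fin n2) ℂ)
    (hK : ∀ i, K i =
      Matrix.fromBlocks
        (σ i • E11.map Complex.ofReal - A11.map Complex.ofReal)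
        (A21.map Complex.ofReal)ᵀ
        (A21.map Complex.ofReal) 0)
    -- K(σᵢ) is invertible and (φᵢ, zᵢ) solves K(σᵢ)(φᵢ; zᵢ) = (B1 bᵢ; 0)
    (hKinv : ∀ i, IsUnit (K i))
    (hsolve : ∀ i,
      (K i) *ᵥ (Sum.elim (φ i) (z i)) = Sum.elim ((B1.map Complex.ofReal) *ᵥ b i) 0)
    -- Φ = [φ₁, …, φ_r] and the reduced matrices Ẽ, Ã, B̃, C̃
    (Φ : Matrix (Fin n1) (Fin r) ℂ) (hΦ : Φ = Matrix.of fun j i => φ i j)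
    (Er Ar : Matrix (Fin r) (Fin r) ℂ)
    (Br : Matrix (Fin r) (Fin m) ℂ) (Cr : Matrix (Fin p) (Fin r) ℂ)
    (hEr : Er = Φᵀ * (E11.map Complex.ofReal) * Φ)
    (hAr : Ar = Φᵀ * (A11.map Complex.ofReal) * Φ)
    (hBr : Br = Φᵀ * (B1.map Complex.ofReal))
    (hCr : Cr = (C.map Complex.ofReal) * Φ) :
    ∀ i : Fin r, IsUnit (σ i • Er - Ar) →
      (Cr * (σ i • Er - Ar)⁻¹ * Br) *ᵥ b i = (C.map Complex.ofReal) *ᵥ φ i := by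
  intro i hinv
  set E' := E11.map Complex.ofReal
  set A' := A11.map Complex.ofReal
  set A2' := A21.map Complex.ofReal
  set B' := B1.map Complex.ofReal
  set C' := C.map Complex.ofReal
  -- extract the two block equations
  have eq1 : (σ i • E' - A') *ᵥ φ i + A2'ᵀ *ᵥ z i = B' *ᵥ b i := by
    have h := hsolve i
    rw [hK i, Matrix.fromBlocks_mulVec] at h
    funext j
    simpa using congrFun h (Sum.inl j)
  have eq2 : ∀ j : Fin r, A2' *ᵥ φ j = 0 := by
    intro j
    have h := hsolve j
    rw [hK j, Matrix.fromBlocks_mulVec] at h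
    funext k
    simpa using congrFun h (Sum.inr k)
  -- A21 Φ = 0, hence Φᵀ A21ᵀ = 0
  have hAΦ : A2' * Φ = 0 := by
    ext k j
    have := congrFun (eq2 j) k
    simpa [hΦ, Matrix.mul_apply, Matrix.mulVec, dotProduct] using this
  have hΦA : Φᵀ * A2'ᵀ = 0 := by
    rw [← Matrix.transpose_mul, hAΦ, Matrix.transpose_zero]
  -- Φ e_i = φ i
  have hsingle : Φ *ᵥ Pi.single i 1 = φ i := by
    funext j
    simp [hΦ, Matrix.mulVec, dotProduct, Pi.single_apply, mul_ite]
  -- key identity: (σ Er - Ar) e_i = Br b_i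
  have hfact : σ i • Er - Ar = Φᵀ * (σ i • E' - A') * Φ := by
    rw [hEr, hAr, Matrix.mul_sub, Matrix.sub_mul, Matrix.mul_smul, Matrix.smul_mul]
  have key : (σ i • Er - Ar) *ᵥ Pi.single i 1 = Br *ᵥ b i := by
    rw [hfact, ← Matrix.mulVec_mulVec, ← Matrix.mulVec_mulVec, hsingle]
    have : (σ i • E' - A') *ᵥ φ i = B' *ᵥ b i - A2'ᵀ *ᵥ z i := by
      rw [← eq1]; ring_nf
    rw [this, Matrix.mulVec_sub, Matrix.mulVec_mulVec, Matrix.mulVec_mulVec, hΦA, hBr,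
      Matrix.zero_mulVec, sub_zero]
  -- invert
  have hdet : IsUnit (σ i • Er - Ar).det := (Matrix.isUnit_iff_isUnit_det _).mp hinv
  have hinvsolve : (σ i • Er - Ar)⁻¹ *ᵥ (Br *ᵥ b i) = Pi.single i 1 := by
    rw [← key, Matrix.mulVec_mulVec, Matrix.nonsing_inv_mul _ hdet, Matrix.one_mulVec]
  calc (Cr * (σ i • Er - Ar)⁻¹ * Br) *ᵥ b i
      = Cr *ᵥ ((σ i • Er - Ar)⁻¹ *ᵥ (Br *ᵥ b i)) := by
        rw [Matrix.mulVec_mulVec, Matrix.mulVec_mulVec]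
    _ = Cr *ᵥ Pi.single i 1 := by rw [hinvsolve]
    _ = C' *ᵥ φ i := by rw [hCr, ← Matrix.mulVec_mulVec, hsingle]
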